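/- Differentiating twice with respect to p and setting p = 0, the product of propagators along a chain satisfies: (1/(2d)) [∂_{p_μ}∂_{p_μ} ∏_a P(p + k_a)]_{p=0} = ∏_a P(k_a) · { Σ_a [ ((4-d)/d) P(k_a) - (4/d) P(k_a)² ] + Σ_{a'<a} (4/d) (P_μ(k_a)/P(k_a)) (P_μ(k_{a'})/P(k_{a'})) }, where P(k) = 1/(1+k²) and P_μ(k) = k_μ/(1+k²)². -/

import Mathlib

open Finset

/-- The propagator `P(k) = 1/(1+|k|²)`. -/
noncomputable def Pprop {d : ℕ} (k : EuclideanSpace ℝ (Fin d)) : ℝ :=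
  (1 + ‖k‖ ^ 2)⁻¹

/-- The vector propagator `P_μ(k) = k_μ/(1+|k|²)²`. -/
noncomputable def Pvec {d : ℕ} (μ : Fin d) (k : EuclideanSpace ℝ (Fin d)) : ℝ :=
  k μ / (1 + ‖k‖ ^ 2) ^ 2

lemma one_add_sq_ne {d : ℕ} (x : EuclideanSpace ℝ (Fin d)) : (1 : ℝ) + ‖x‖ ^ 2 ≠ 0 := by
  positivity

lemma hasFDerivAt_Pk {d : ℕ} (c x : EuclideanSpace ℝ (Fin d)) :
    HasFDerivAt (fun p => Pprop (p + c))
      ((-(2 * Pprop (x + c) ^ 2)) • (innerSL ℝ (x + c))) x := by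
  have h0 : HasFDerivAt (fun p : EuclideanSpace ℝ (Fin d) => p + c)
      (ContinuousLinearMap.id ℝ _) x := (hasFDerivAt_id x).add_const c
  have hs1 : HasFDerivAt (fun p : EuclideanSpace ℝ (Fin d) => 1 + ‖p + c‖ ^ 2)
      (2 • (innerSL ℝ (x + c)).comp (ContinuousLinearMap.id ℝ _)) x := h0.norm_sq.const_add 1
  have hinv := (hasDerivAt_inv (one_add_sq_ne (x + c))).comp_hasFDerivAt x hs1
  refine hinv.congr_fderiv ?_
  ext y
  simp [Pprop, ContinuousLinearMap.smul_apply]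
  ring

lemma hasFDerivAt_inner_shift {d : ℕ} (c v x : EuclideanSpace ℝ (Fin d)) :
    HasFDerivAt (fun q : EuclideanSpace ℝ (Fin d) => (inner ℝ (q + c) v : ℝ))
      (innerSL ℝ v) x := by
  have h0 : HasFDerivAt (fun p : EuclideanSpace ℝ (Fin d) => p + c)
      (ContinuousLinearMap.id ℝ _) x := (hasFDerivAt_id x).add_const c
  have := ((innerSL ℝ v).hasFDerivAt (x := x + c)).comp x h0
  refine HasFDerivAt.congr_of_eventuallyEq (this.congr_fderiv (ContinuousLinearMap.comp_id _))
    (Filter.Eventually.of_forall fun q => ?_)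
  exact real_inner_comm _ _

section
variable {d m : ℕ} (k : Fin m → EuclideanSpace ℝ (Fin d))

lemma hprod (s : Finset (Fin m)) (x : EuclideanSpace ℝ (Fin d)) :
    HasFDerivAt (fun q => ∏ b ∈ s, Pprop (q + k b))
      (∑ a ∈ s, (∏ b ∈ s.erase a, Pprop (x + k b)) •
        ((-(2 * Pprop (x + k a) ^ 2)) • (innerSL ℝ (x + k a)))) x :=
  HasFDerivAt.finset_prod (fun a _ => hasFDerivAt_Pk (k a) x)

lemma fderiv_F (v x : EuclideanSpace ℝ (Fin d)) :
    fderiv ℝ (fun p => ∏ a, Pprop (p + k a)) x v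
    = ∑ a, (∏ b ∈ univ.erase a, Pprop (x + k b)) *
        ((-2 : ℝ) * (Pprop (x + k a) ^ 2 * inner ℝ (x + k a) v)) := by
  rw [(hprod k univ x).fderiv]
  simp only [ContinuousLinearMap.sum_apply, ContinuousLinearMap.coe_smul', Pi.smul_apply,
    innerSL_apply_apply, smul_eq_mul]
  exact Finset.sum_congr rfl fun a _ => by ring

end
section
variable {d m : ℕ} (k : Fin m → EuclideanSpace ℝ (Fin d))

lemma second_deriv (v : EuclideanSpace ℝ (Fin d)) :
    fderiv ℝ (fun q => fderiv ℝ (fun p => ∏ a, Pprop (p + k a)) q v) 0 v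
    = ∑ a, ((∏ b ∈ univ.erase a, Pprop (k b)) *
          (8 * Pprop (k a) ^ 3 * (inner ℝ (k a) v : ℝ) ^ 2
            - 2 * Pprop (k a) ^ 2 * (inner ℝ v v : ℝ))
        + ∑ c ∈ univ.erase a, (∏ b ∈ (univ.erase a).erase c, Pprop (k b)) *
            (4 * Pprop (k a) ^ 2 * Pprop (k c) ^ 2 * (inner ℝ (k a) v : ℝ)
              * (inner ℝ (k c) v : ℝ))) := by
  have hfun : (fun q => fderiv ℝ (fun p => ∏ a, Pprop (p + k a)) q v)
      = fun q => ∑ a, (∏ b ∈ univ.erase a, Pprop (q + k b)) *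
        ((-2 : ℝ) * (Pprop (q + k a) ^ 2 * inner ℝ (q + k a) v)) := funext (fderiv_F k v)
  rw [hfun]
  have hsq : ∀ a : Fin m, HasFDerivAt (fun q => Pprop (q + k a) ^ 2)
      (Pprop (0 + k a) • (-(2 * Pprop (0 + k a) ^ 2) • innerSL ℝ (0 + k a))
        + Pprop (0 + k a) • (-(2 * Pprop (0 + k a) ^ 2) • innerSL ℝ (0 + k a))) 0 := fun a => by
    have h := (hasFDerivAt_Pk (k a) 0).mul (hasFDerivAt_Pk (k a) 0)
    simp only [pow_two] at h ⊢
    exact h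
  have H := HasFDerivAt.sum (u := (univ : Finset (Fin m))) (fun a (_ : a ∈ univ) =>
    ((hprod k (univ.erase a) 0).mul
      (((hsq a).mul (hasFDerivAt_inner_shift (k a) v 0)).const_mul (-2))))
  rw [(H.congr_of_eventuallyEq (f₁ := fun q => ∑ a, (∏ b ∈ univ.erase a, Pprop (q + k b)) *
      ((-2 : ℝ) * (Pprop (q + k a) ^ 2 * inner ℝ (q + k a) v)))
      (Filter.Eventually.of_forall fun q => by simp [Finset.sum_apply])).fderiv]
  simp only [ContinuousLinearMap.sum_apply, ContinuousLinearMap.add_apply,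
    ContinuousLinearMap.coe_smul', Pi.smul_apply, ContinuousLinearMap.smul_apply,
    innerSL_apply_apply, smul_eq_mul, zero_add, Pi.mul_apply]
  refine Finset.sum_congr rfl fun a _ => ?_
  rw [Finset.mul_sum]
  exact congrArg₂ (· + ·) (by ring) (Finset.sum_congr rfl fun c _ => by ring)

end
lemma sym_sum {m : ℕ} (g : Fin m → Fin m → ℝ) (hg : ∀ a c, g a c = g c a) :
    ∑ a, ∑ c ∈ univ.erase a, g a c
      = 2 * ∑ a, ∑ c ∈ univ.filter (· < a), g a c := by
  have step1 : ∀ a : Fin m, ∑ c ∈ univ.erase a, g a c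
      = ∑ c : Fin m, ((if c < a then g a c else 0) + (if a < c then g a c else 0)) := by
    intro a
    rw [← Finset.filter_ne' univ a, Finset.sum_filter]
    refine Finset.sum_congr rfl fun c _ => ?_
    rcases lt_trichotomy c a with h | h | h
    · simp [h, h.ne, asymm h]
    · simp [h]
    · simp [h, h.ne', asymm h]
  have step2 : ∑ a : Fin m, ∑ c : Fin m, (if a < c then g a c else 0)
      = ∑ a : Fin m, ∑ c : Fin m, (if c < a then g a c else 0) := by
    rw [Finset.sum_comm]
    exact Finset.sum_congr rfl fun a _ => Finset.sum_congr rfl fun c _ => by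
      by_cases h : c < a <;> simp [h, hg]
  calc ∑ a, ∑ c ∈ univ.erase a, g a c
      = ∑ a : Fin m, ∑ c : Fin m, ((if c < a then g a c else 0) + (if a < c then g a c else 0)) :=
        Finset.sum_congr rfl fun a _ => step1 a
    _ = (∑ a : Fin m, ∑ c : Fin m, (if c < a then g a c else 0))
        + ∑ a : Fin m, ∑ c : Fin m, (if a < c then g a c else 0) := by
        rw [← Finset.sum_add_distrib]
        exact Finset.sum_congr rfl fun a _ => Finset.sum_add_distrib
    _ = 2 * ∑ a : Fin m, ∑ c : Fin m, (if c < a then g a c else 0) := by rw [step2]; ring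
    _ = 2 * ∑ a, ∑ c ∈ univ.filter (· < a), g a c := by
        congr 1
        exact Finset.sum_congr rfl fun a _ => (Finset.sum_filter _ _).symm

lemma coord_sum_sq {d : ℕ} (x : EuclideanSpace ℝ (Fin d)) :
    ∑ μ : Fin d, x μ * x μ = ‖x‖ ^ 2 := by
  rw [EuclideanSpace.norm_eq, Real.sq_sqrt (by positivity)]
  simp [sq]

lemma Pprop_pos {d : ℕ} (x : EuclideanSpace ℝ (Fin d)) : 0 < Pprop x := by
  unfold Pprop; positivity

lemma Pprop_mul (x : EuclideanSpace ℝ (Fin d)) : Pprop x * (1 + ‖x‖ ^ 2) = 1 :=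
  inv_mul_cancel₀ (one_add_sq_ne x)

lemma Pvec_div {d : ℕ} (μ : Fin d) (x : EuclideanSpace ℝ (Fin d)) :
    Pvec μ x / Pprop x = x μ * Pprop x := by
  unfold Pvec Pprop
  have h := one_add_sq_ne x
  field_simp


/-- The identity (chainD): `(1/(2d)) [∂_{p_μ}∂_{p_μ} ∏_a P(p + k_a)]_{p=0}`
equals `∏_a P(k_a) · { Σ_a [((4-d)/d) P(k_a) - (4/d) P(k_a)²]
+ Σ_{a'<a} (4/d)(P_μ(k_a)/P(k_a))(P_μ(k_{a'})/P(k_{a'})) }` (μ summed). -/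
theorem stmt17 (d m : ℕ) (hd : 0 < d) (k : Fin m → EuclideanSpace ℝ (Fin d)) :
    (1 / (2 * (d : ℝ))) * ∑ μ : Fin d,
      fderiv ℝ (fun q : EuclideanSpace ℝ (Fin d) =>
          fderiv ℝ (fun p : EuclideanSpace ℝ (Fin d) => ∏ a, Pprop (p + k a)) q
            (EuclideanSpace.single μ 1)) 0 (EuclideanSpace.single μ 1)
    = (∏ a, Pprop (k a)) *
      ((∑ a, (((4 : ℝ) - d) / d * Pprop (k a) - 4 / d * Pprop (k a) ^ 2)) +
        ∑ a, ∑ a' ∈ Finset.univ.filter (· < a),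
          4 / (d : ℝ) * ∑ μ : Fin d,
            (Pvec μ (k a) / Pprop (k a)) * (Pvec μ (k a') / Pprop (k a'))) := by
  have hdr : (d : ℝ) ≠ 0 := Nat.cast_ne_zero.mpr hd.ne'
  have h1 : ∀ μ : Fin d,
      fderiv ℝ (fun q : EuclideanSpace ℝ (Fin d) =>
          fderiv ℝ (fun p : EuclideanSpace ℝ (Fin d) => ∏ a, Pprop (p + k a)) q
            (EuclideanSpace.single μ 1)) 0 (EuclideanSpace.single μ 1)
      = ∑ a, ((∏ b ∈ univ.erase a, Pprop (k b)) *
            (8 * Pprop (k a) ^ 3 * (k a μ) ^ 2 - 2 * Pprop (k a) ^ 2 * 1)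
          + ∑ c ∈ univ.erase a, (∏ b ∈ (univ.erase a).erase c, Pprop (k b)) *
              (4 * Pprop (k a) ^ 2 * Pprop (k c) ^ 2 * (k a μ * k c μ))) := by
    intro μ
    rw [second_deriv k (EuclideanSpace.single μ 1)]
    refine Finset.sum_congr rfl fun a _ => ?_
    have hr : ∀ x : EuclideanSpace ℝ (Fin d),
        (inner ℝ x (EuclideanSpace.single μ (1 : ℝ)) : ℝ) = x μ := fun x => by
      simp [EuclideanSpace.inner_single_right]
    simp only [hr, EuclideanSpace.single_apply, if_true]
    refine congrArg₂ (· + ·) (by ring) (Finset.sum_congr rfl fun c _ => by ring)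
  simp_rw [h1]
  rw [Finset.sum_comm]
  -- per-a sum over μ
  have h2 : ∀ a : Fin m,
      ∑ μ : Fin d, ((∏ b ∈ univ.erase a, Pprop (k b)) *
            (8 * Pprop (k a) ^ 3 * (k a μ) ^ 2 - 2 * Pprop (k a) ^ 2 * 1)
          + ∑ c ∈ univ.erase a, (∏ b ∈ (univ.erase a).erase c, Pprop (k b)) *
              (4 * Pprop (k a) ^ 2 * Pprop (k c) ^ 2 * (k a μ * k c μ)))
      = (∏ b, Pprop (k b)) * ((8 - 2 * d) * Pprop (k a) - 8 * Pprop (k a) ^ 2)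
        + ∑ c ∈ univ.erase a, (∏ b, Pprop (k b)) *
            (4 * Pprop (k a) * Pprop (k c) * ∑ μ : Fin d, k a μ * k c μ) := by
    intro a
    rw [Finset.sum_add_distrib]
    refine congrArg₂ (· + ·) ?_ ?_
    · rw [← Finset.mul_sum]
      have hsum : ∑ μ : Fin d, (8 * Pprop (k a) ^ 3 * (k a μ) ^ 2 - 2 * Pprop (k a) ^ 2 * 1)
          = 8 * Pprop (k a) ^ 3 * ‖k a‖ ^ 2 - 2 * Pprop (k a) ^ 2 * d := by
        rw [Finset.sum_sub_distrib, ← Finset.mul_sum, ← Finset.mul_sum]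
        simp_rw [pow_two]
        rw [coord_sum_sq, Finset.sum_const, Finset.card_univ, Fintype.card_fin]
        ring
      rw [hsum]
      have hprodP : Pprop (k a) * ∏ b ∈ univ.erase a, Pprop (k b) = ∏ b, Pprop (k b) :=
        Finset.mul_prod_erase univ (fun b => Pprop (k b)) (Finset.mem_univ a)
      have hNa : Pprop (k a) * ‖k a‖ ^ 2 = 1 - Pprop (k a) := by
        have := Pprop_mul (k a); linarith [this]
      rw [← hprodP]
      linear_combination (8 * Pprop (k a) ^ 2 * (∏ b ∈ univ.erase a, Pprop (k b))) * hNa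
    · rw [Finset.sum_comm]
      refine Finset.sum_congr rfl fun c hc => ?_
      rw [← Finset.mul_sum, ← Finset.mul_sum]
      have hc2 : Pprop (k c) * ∏ b ∈ (univ.erase a).erase c, Pprop (k b)
          = ∏ b ∈ univ.erase a, Pprop (k b) :=
        Finset.mul_prod_erase _ (fun b => Pprop (k b)) hc
      have hprodP : Pprop (k a) * ∏ b ∈ univ.erase a, Pprop (k b) = ∏ b, Pprop (k b) :=
        Finset.mul_prod_erase univ (fun b => Pprop (k b)) (Finset.mem_univ a)
      rw [← hprodP, ← hc2]
      ring
  simp_rw [h2]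
  rw [Finset.sum_add_distrib]
  rw [sym_sum (fun a c => (∏ b, Pprop (k b)) *
      (4 * Pprop (k a) * Pprop (k c) * ∑ μ : Fin d, k a μ * k c μ))
      (fun a c => by
        dsimp only
        rw [show (∑ μ : Fin d, k a μ * k c μ) = ∑ μ : Fin d, k c μ * k a μ from
          Finset.sum_congr rfl fun μ _ => mul_comm _ _]
        ring)]
  -- RHS inner pair sums
  have h3 : ∀ a a' : Fin m,
      (4 / (d : ℝ) * ∑ μ : Fin d,
          (Pvec μ (k a) / Pprop (k a)) * (Pvec μ (k a') / Pprop (k a')))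
      = 4 / d * (Pprop (k a) * Pprop (k a') * ∑ μ : Fin d, k a μ * k a' μ) := by
    intro a a'
    congr 1
    simp_rw [Pvec_div]
    rw [Finset.mul_sum]
    exact Finset.sum_congr rfl fun μ _ => by ring
  simp_rw [h3]
  simp only [mul_add, Finset.mul_sum]
  refine congrArg₂ (· + ·) (Finset.sum_congr rfl fun a _ => by field_simp; ring)
    (Finset.sum_congr rfl fun a _ => Finset.sum_congr rfl fun c _ => by
      field_simp)
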